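/- Let τ ∈ (0,1) be the unique solution of x·e^{1−x} = 2/3 in (0,1). Define q_1, q_2 : (0,1] → ℝ by: q_1(x) := 0 for x ∈ (0, τ), q_1(x) := 2·ln(3x/2) − 2x + 2 for x ∈ [τ, 2/3), q_1(x) := x for x ∈ [2/3, 1]; and q_2(x) := 0 for x ∈ (0, 2/3), q_2(x) := 3x − 2 for x ∈ [2/3, 1]. Then: (i) q_1, q_2 ≥ 0; (ii) for all x ∈ (0,1], q_1(x) + (1/x)·∫_x^1 [q_1(y) + q_2(y)] dy ≥ 2 − x, with equality for x ∈ [τ, 1]; (iii) for all x ∈ (0,1], q_2(x) + (1/x)·∫_x^1 [q_1(y) + q_2(y)] dy ≥ x, with equality for x ∈ [2/3, 1]; and (iv) ∫_0^1 [q_1(x) + q_2(x)] dx = 2τ − τ². -/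

import Mathlib

open MeasureTheory intervalIntegral

/-- The optimal dual solution `(q_1, q_2)` of the continuous LP dual `CD(1,2)` for the
1-choice 2-best secretary problem, where `τ = -W(-2/(3e))` is the unique solution in
`(0,1)` of `x e^(1-x) = 2/3`: the constraints `q_k(x) + (1/x)∫_x^1 (q_1+q_2) ≥ α_k(x)`
hold for `α_1(x) = 2 - x` and `α_2(x) = x` (with equality on `[τ,1]` resp. `[2/3,1]`),
and the objective `∫_0^1 (q_1+q_2)` equals the optimal payoff `2τ - τ²`. -/
theorem optimal_dual_CD12
    (τ : ℝ) (hτ : τ ∈ Set.Ioo (0 : ℝ) 1) (hτeq : τ * Real.exp (1 - τ) = 2 / 3)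
    (q₁ q₂ : ℝ → ℝ)
    (hq₁a : ∀ x ∈ Set.Ioo (0 : ℝ) τ, q₁ x = 0)
    (hq₁b : ∀ x ∈ Set.Ico τ (2 / 3 : ℝ), q₁ x = 2 * Real.log (3 * x / 2) - 2 * x + 2)
    (hq₁c : ∀ x ∈ Set.Icc (2 / 3 : ℝ) 1, q₁ x = x)
    (hq₂a : ∀ x ∈ Set.Ioo (0 : ℝ) (2 / 3 : ℝ), q₂ x = 0)
    (hq₂b : ∀ x ∈ Set.Icc (2 / 3 : ℝ) 1, q₂ x = 3 * x - 2) :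
    (∀ x ∈ Set.Ioc (0 : ℝ) 1, 0 ≤ q₁ x ∧ 0 ≤ q₂ x) ∧
    (∀ x ∈ Set.Ioc (0 : ℝ) 1,
      2 - x ≤ q₁ x + (1 / x) * ∫ y in x..(1 : ℝ), (q₁ y + q₂ y)) ∧
    (∀ x ∈ Set.Icc τ 1,
      q₁ x + (1 / x) * (∫ y in x..(1 : ℝ), (q₁ y + q₂ y)) = 2 - x) ∧
    (∀ x ∈ Set.Ioc (0 : ℝ) 1,
      x ≤ q₂ x + (1 / x) * ∫ y in x..(1 : ℝ), (q₁ y + q₂ y)) ∧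
    (∀ x ∈ Set.Icc (2 / 3 : ℝ) 1,
      q₂ x + (1 / x) * (∫ y in x..(1 : ℝ), (q₁ y + q₂ y)) = x) ∧
    (∫ x in (0 : ℝ)..1, (q₁ x + q₂ x)) = 2 * τ - τ ^ 2 := by
  obtain ⟨hτ0, hτ1⟩ := hτ
  -- τ < 2/3
  have hτ23 : τ < 2 / 3 := by
    by_contra h
    push_neg at h
    have he : 2 - τ ≤ Real.exp (1 - τ) := by
      have := Real.add_one_le_exp (1 - τ); linarith
    nlinarith [mul_le_mul_of_nonneg_left he (le_of_lt hτ0)]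
  -- log (3τ/2) = τ - 1
  have hexp : Real.exp (1 - τ) * Real.exp (τ - 1) = 1 := by
    rw [← Real.exp_add]; norm_num
  have h32 : 3 * τ / 2 = Real.exp (τ - 1) := by
    linear_combination (3 / 2 * Real.exp (τ - 1)) * hτeq - (3 / 2 * τ) * hexp
  have hlog : Real.log (3 * τ / 2) = τ - 1 := by rw [h32, Real.log_exp]
  -- values of q₁ + q₂ on the three regions
  have hfa : ∀ y ∈ Set.Ioc (0 : ℝ) τ, q₁ y + q₂ y = 0 := by
    intro y ⟨hy0, hyτ⟩
    rcases eq_or_lt_of_le hyτ with h | h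
    · subst h
      rw [hq₁b y ⟨le_refl _, hτ23⟩, hq₂a y ⟨hy0, hτ23⟩, hlog]; ring
    · rw [hq₁a y ⟨hy0, h⟩, hq₂a y ⟨hy0, lt_trans h hτ23⟩]; ring
  have hfb : ∀ y ∈ Set.Icc τ (2 / 3 : ℝ), q₁ y + q₂ y = 2 * Real.log (3 * y / 2) - 2 * y + 2 := by
    intro y ⟨h1, h2⟩
    rcases eq_or_lt_of_le h2 with h | h
    · subst h
      rw [hq₁c _ ⟨le_refl _, by norm_num⟩, hq₂b _ ⟨le_refl _, by norm_num⟩]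
      norm_num
    · rw [hq₁b y ⟨h1, h⟩, hq₂a y ⟨lt_of_lt_of_le hτ0 h1, h⟩]; ring
  have hfc : ∀ y ∈ Set.Icc (2 / 3 : ℝ) 1, q₁ y + q₂ y = 4 * y - 2 := by
    intro y hy
    rw [hq₁c y hy, hq₂b y hy]; ring
  -- integrability on each region
  have hiiA : ∀ a b : ℝ, 0 ≤ a → a ≤ b → b ≤ τ →
      IntervalIntegrable (fun y => q₁ y + q₂ y) volume a b := by
    intro a b ha hab hb
    refine ((continuous_const (y := (0:ℝ))).intervalIntegrable a b).congr ?_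
    intro y hy
    rw [Set.uIoc_of_le hab] at hy
    exact (hfa y ⟨lt_of_le_of_lt ha hy.1, le_trans hy.2 hb⟩).symm
  have hiiB : ∀ a b : ℝ, τ ≤ a → a ≤ b → b ≤ 2 / 3 →
      IntervalIntegrable (fun y => q₁ y + q₂ y) volume a b := by
    intro a b ha hab hb
    have hg : ContinuousOn (fun y => 2 * Real.log (3 * y / 2) - 2 * y + 2) (Set.uIcc a b) := by
      have h1 : ContinuousOn (fun y : ℝ => 3 * y / 2) (Set.uIcc a b) := by fun_prop
      have h2 := h1.log (fun y hy => by
        rw [Set.uIcc_of_le hab] at hy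
        have : 0 < y := lt_of_lt_of_le (lt_of_lt_of_le hτ0 ha) hy.1
        positivity)
      exact ((continuousOn_const.mul h2).sub (by fun_prop)).add continuousOn_const
    refine (hg.intervalIntegrable).congr ?_
    intro y hy
    rw [Set.uIoc_of_le hab] at hy
    exact (hfb y ⟨le_trans ha (le_of_lt hy.1), le_trans hy.2 hb⟩).symm
  have hiiC : ∀ a b : ℝ, 2 / 3 ≤ a → a ≤ b → b ≤ 1 →
      IntervalIntegrable (fun y => q₁ y + q₂ y) volume a b := by
    intro a b ha hab hb
    have hc : Continuous fun y : ℝ => 4 * y - 2 := by fun_prop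
    refine (hc.intervalIntegrable a b).congr ?_
    intro y hy
    rw [Set.uIoc_of_le hab] at hy
    exact (hfc y ⟨le_trans ha (le_of_lt hy.1), le_trans hy.2 hb⟩).symm
  -- integral on [x,1] for x ∈ [2/3,1]
  have hIc : ∀ x : ℝ, 2 / 3 ≤ x → x ≤ 1 → (∫ y in x..(1 : ℝ), (q₁ y + q₂ y)) = 2 * x - 2 * x ^ 2 := by
    intro x hx hx1
    rw [intervalIntegral.integral_congr (g := fun y => 4 * y - 2)
      (fun y hy => by
        rw [Set.uIcc_of_le hx1] at hy
        exact hfc y ⟨le_trans hx hy.1, hy.2⟩)]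
    have hc : Continuous fun y : ℝ => 4 * y - 2 := by fun_prop
    have hd : ∀ y : ℝ, HasDerivAt (fun y : ℝ => 2 * y ^ 2 - 2 * y) (4 * y - 2) y := by
      intro y
      have h : HasDerivAt (fun y : ℝ => 2 * y ^ 2 - 2 * y) (2 * ((2:ℕ) * y ^ (2 - 1)) - 2 * 1) y :=
        ((hasDerivAt_pow 2 y).const_mul 2).sub ((hasDerivAt_id y).const_mul 2)
      convert h using 1; norm_num; ring
    rw [intervalIntegral.integral_eq_sub_of_hasDerivAt (fun y _ => hd y)
      (hc.intervalIntegrable _ _)]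
    ring
  -- integral on [x,2/3] for x ∈ [τ,2/3]
  have hIb : ∀ x : ℝ, τ ≤ x → x ≤ 2 / 3 →
      (∫ y in x..(2 / 3 : ℝ), (q₁ y + q₂ y)) = x ^ 2 - 2 * x * Real.log (3 * x / 2) - 4 / 9 := by
    intro x hx hx23
    rw [intervalIntegral.integral_congr (g := fun y => 2 * Real.log (3 * y / 2) - 2 * y + 2)
      (fun y hy => by
        rw [Set.uIcc_of_le hx23] at hy
        exact hfb y ⟨le_trans hx hy.1, hy.2⟩)]
    have hg : ContinuousOn (fun y => 2 * Real.log (3 * y / 2) - 2 * y + 2) (Set.uIcc x (2 / 3)) := by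
      have h1 : ContinuousOn (fun y : ℝ => 3 * y / 2) (Set.uIcc x (2 / 3)) := by fun_prop
      have h2 := h1.log (fun y hy => by
        rw [Set.uIcc_of_le hx23] at hy
        have : 0 < y := lt_of_lt_of_le (lt_of_lt_of_le hτ0 hx) hy.1
        positivity)
      exact ((continuousOn_const.mul h2).sub (by fun_prop)).add continuousOn_const
    rw [intervalIntegral.integral_eq_sub_of_hasDerivAt
      (f := fun y : ℝ => 2 * y * Real.log (3 * y / 2) - y ^ 2)
      (fun y hy => by
        rw [Set.uIcc_of_le hx23] at hy
        have hy0 : 0 < y := lt_of_lt_of_le (lt_of_lt_of_le hτ0 hx) hy.1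
        have h1 : HasDerivAt (fun y : ℝ => 3 * y / 2) (3 / 2) y := by
          simpa using ((hasDerivAt_id y).const_mul 3).div_const 2
        have h2 : HasDerivAt (fun y => Real.log (3 * y / 2)) ((3 * y / 2)⁻¹ * (3 / 2)) y :=
          (Real.hasDerivAt_log (by positivity)).comp y h1
        have h3 := ((hasDerivAt_id y).const_mul 2).mul h2
        have h4 := h3.sub (hasDerivAt_pow 2 y)
        have h5 : HasDerivAt (fun y : ℝ => 2 * y * Real.log (3 * y / 2) - y ^ 2)
            (2 * 1 * Real.log (3 * y / 2) + 2 * id y * ((3 * y / 2)⁻¹ * (3 / 2)) -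
              ((2:ℕ):ℝ) * y ^ (2 - 1)) y := h4
        refine h5.congr_deriv ?_
        norm_num [id]
        field_simp
        ring)
      hg.intervalIntegrable]
    have : Real.log (3 * (2 / 3) / 2) = 0 := by norm_num
    rw [this]
    ring
  -- integral on [τ,1]
  have hIτ1 : (∫ y in τ..(1 : ℝ), (q₁ y + q₂ y)) = 2 * τ - τ ^ 2 := by
    rw [← intervalIntegral.integral_add_adjacent_intervals
      (hiiB τ (2 / 3) (le_refl _) (le_of_lt hτ23) (le_refl _))
      (hiiC (2 / 3) 1 (le_refl _) (by norm_num) (le_refl _))]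
    rw [hIb τ (le_refl _) (le_of_lt hτ23), hIc (2 / 3) (le_refl _) (by norm_num), hlog]
    ring
  -- integral on [x,1] for x ∈ [τ,2/3]
  have hIbx1 : ∀ x : ℝ, τ ≤ x → x ≤ 2 / 3 →
      (∫ y in x..(1 : ℝ), (q₁ y + q₂ y)) = x ^ 2 - 2 * x * Real.log (3 * x / 2) := by
    intro x hx hx23
    rw [← intervalIntegral.integral_add_adjacent_intervals
      (hiiB x (2 / 3) hx hx23 (le_refl _))
      (hiiC (2 / 3) 1 (le_refl _) (by norm_num) (le_refl _))]
    rw [hIb x hx hx23, hIc (2 / 3) (le_refl _) (by norm_num)]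
    ring
  -- integral on [x,1] for x ∈ (0,τ]
  have hIax1 : ∀ x : ℝ, 0 ≤ x → x ≤ τ →
      (∫ y in x..(1 : ℝ), (q₁ y + q₂ y)) = 2 * τ - τ ^ 2 := by
    intro x hx0 hxτ
    rw [← intervalIntegral.integral_add_adjacent_intervals
      (hiiA x τ hx0 hxτ (le_refl _))
      ((hiiB τ (2 / 3) (le_refl _) (le_of_lt hτ23) (le_refl _)).trans
        (hiiC (2 / 3) 1 (le_refl _) (by norm_num) (le_refl _)))]
    have h0 : (∫ y in x..τ, (q₁ y + q₂ y)) = 0 := by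
      apply intervalIntegral.integral_zero_ae
      filter_upwards with y hy
      rw [Set.uIoc_of_le hxτ] at hy
      exact hfa y ⟨lt_of_le_of_lt hx0 hy.1, hy.2⟩
    rw [h0, hIτ1]
    ring
  refine ⟨?_, ?_, ?_, ?_, ?_, ?_⟩
  -- (1) nonnegativity
  · intro x ⟨hx0, hx1⟩
    constructor
    · rcases lt_or_ge x τ with h | h
      · rw [hq₁a x ⟨hx0, h⟩]
      · rcases lt_or_ge x (2 / 3) with h2 | h2
        · rw [hq₁b x ⟨h, h2⟩]
          have hlx : Real.log (τ / x) ≤ τ / x - 1 := Real.log_le_sub_one_of_pos (by positivity)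
          have hlog2 : Real.log (3 * x / 2) = (τ - 1) - Real.log (τ / x) := by
            rw [← hlog, Real.log_div (ne_of_gt hτ0) (ne_of_gt hx0)]
            rw [show (3 : ℝ) * x / 2 = (3 * τ / 2) / (τ / x) by field_simp,
              Real.log_div (by positivity) (by positivity),
              Real.log_div (ne_of_gt hτ0) (ne_of_gt hx0)]
          rw [hlog2]
          have hτx : τ / x ≤ 1 := by
            rw [div_le_one hx0]; exact h
          have hL0 : Real.log (τ / x) ≤ 0 := Real.log_nonpos (by positivity) hτx
          have hxL : x * Real.log (τ / x) ≤ τ - x := by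
            have := mul_le_mul_of_nonneg_left hlx (le_of_lt hx0)
            have hdiv : x * (τ / x - 1) = τ - x := by field_simp
            linarith [hdiv ▸ this]
          nlinarith [mul_nonneg (neg_nonneg.2 hL0) (sub_nonneg.2 hx1)]
        · rw [hq₁c x ⟨h2, hx1⟩]; linarith
    · rcases lt_or_ge x (2 / 3) with h2 | h2
      · rw [hq₂a x ⟨hx0, h2⟩]
      · rw [hq₂b x ⟨h2, hx1⟩]; linarith
  -- (2) first constraint
  · intro x ⟨hx0, hx1⟩
    rcases lt_or_ge x τ with h | h
    · rw [hIax1 x (le_of_lt hx0) (le_of_lt h), hq₁a x ⟨hx0, h⟩]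
      rw [zero_add, ← sub_nonneg]
      have : 1 / x * (2 * τ - τ ^ 2) - (2 - x) = ((τ - x) * (2 - τ - x)) / x := by
        field_simp; ring
      rw [this]
      apply div_nonneg _ (le_of_lt hx0)
      nlinarith
    · rcases lt_or_ge x (2 / 3) with h2 | h2
      · rw [hIbx1 x h (le_of_lt h2), hq₁b x ⟨h, h2⟩]
        have : 2 * Real.log (3 * x / 2) - 2 * x + 2 +
            1 / x * (x ^ 2 - 2 * x * Real.log (3 * x / 2)) = 2 - x := by
          field_simp; ring
        rw [this]
      · rw [hIc x h2 hx1, hq₁c x ⟨h2, hx1⟩]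
        have : x + 1 / x * (2 * x - 2 * x ^ 2) = 2 - x := by
          field_simp; ring
        rw [this]
  -- (3) equality of first constraint on [τ,1]
  · intro x ⟨hxτ, hx1⟩
    have hx0 : 0 < x := lt_of_lt_of_le hτ0 hxτ
    rcases lt_or_ge x (2 / 3) with h2 | h2
    · rw [hIbx1 x hxτ (le_of_lt h2), hq₁b x ⟨hxτ, h2⟩]
      field_simp; ring
    · rw [hIc x h2 hx1, hq₁c x ⟨h2, hx1⟩]
      field_simp; ring
  -- (4) second constraint
  · intro x ⟨hx0, hx1⟩
    rcases lt_or_ge x τ with h | h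
    · rw [hIax1 x (le_of_lt hx0) (le_of_lt h), hq₂a x ⟨hx0, lt_trans h hτ23⟩]
      rw [zero_add, ← sub_nonneg]
      have : 1 / x * (2 * τ - τ ^ 2) - x = ((2 * τ - τ ^ 2) - x ^ 2) / x := by
        field_simp
      rw [this]
      apply div_nonneg _ (le_of_lt hx0)
      nlinarith
    · rcases lt_or_ge x (2 / 3) with h2 | h2
      · rw [hIbx1 x h (le_of_lt h2), hq₂a x ⟨hx0, h2⟩]
        have hlx : Real.log (3 * x / 2) ≤ 0 :=
          Real.log_nonpos (by positivity) (by linarith)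
        rw [zero_add, ← sub_nonneg]
        have : 1 / x * (x ^ 2 - 2 * x * Real.log (3 * x / 2)) - x =
            -2 * Real.log (3 * x / 2) := by
          field_simp; ring
        rw [this]
        linarith
      · rw [hIc x h2 hx1, hq₂b x ⟨h2, hx1⟩]
        have : 3 * x - 2 + 1 / x * (2 * x - 2 * x ^ 2) = x := by
          field_simp; ring
        rw [this]
  -- (5) equality of second constraint on [2/3,1]
  · intro x ⟨hx23, hx1⟩
    have hx0 : (0 : ℝ) < x := by linarith
    rw [hIc x hx23 hx1, hq₂b x ⟨hx23, hx1⟩]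
    field_simp; ring
  -- (6) the objective
  · rw [← intervalIntegral.integral_add_adjacent_intervals
      (hiiA 0 τ (le_refl _) (le_of_lt hτ0) (le_refl _))
      ((hiiB τ (2 / 3) (le_refl _) (le_of_lt hτ23) (le_refl _)).trans
        (hiiC (2 / 3) 1 (le_refl _) (by norm_num) (le_refl _)))]
    have h0 : (∫ y in (0 : ℝ)..τ, (q₁ y + q₂ y)) = 0 := by
      apply intervalIntegral.integral_zero_ae
      filter_upwards with y hy
      rw [Set.uIoc_of_le (le_of_lt hτ0)] at hy
      exact hfa y hy
    rw [h0, hIτ1]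
    ring
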